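/- Let k ≥ 0 and 0 ≤ i ≤ 2k+1 be integers and set s = k(k+1) + i. For every odd integer n with n > N_s^odd, the number of representations of g((n+1)/2, (n+3)/2; x_s^odd) + y_s^odd·t_n by the three numbers t_n, (n+1)/2, (n+3)/2 equals s, i.e. d(g((n+1)/2, (n+3)/2; x_s^odd) + y_s^odd·t_n ; t_n, (n+1)/2, (n+3)/2) = s. (Here (n+1)/2 = t_{n+1}/d_1 and (n+3)/2 = t_{n+2}/d_1 where d_1 = gcd(t_{n+1}, t_{n+2}) = n+2 for odd n.) -/
import Mathlib


open Finset

/-- Number of representations of `m` as `∑ i, a i * x i` with nonnegative integers `x i`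
(for positive weights `a i`, every solution satisfies `x i ≤ m`). -/
def repCount {k : ℕ} (a : Fin k → ℕ) (m : ℕ) : ℕ :=
  (Finset.univ.filter (fun x : Fin k → Fin (m + 1) => ∑ i, a i * (x i : ℕ) = m)).card

/-- Representation count extended to the integers (no representations of negative numbers). -/
def repCountZ {k : ℕ} (a : Fin k → ℕ) (m : ℤ) : ℕ :=
  if 0 ≤ m then repCount a m.toNat else 0

/-- The generalized Frobenius number `g(a; s)`: the largest integer having at most `s`
representations by the tuple `a`. -/
noncomputable def genFrob {k : ℕ} (a : Fin k → ℕ) (s : ℕ) : ℤ :=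
  sSup {m : ℤ | repCountZ a m ≤ s}

/-- The `n`-th triangular number `t n = n(n+1)/2`. -/
def t (n : ℕ) : ℕ := n * (n + 1) / 2

/-- `N_s^even = 6⌊√(s+1)⌋ - 6`. -/
def NEven (s : ℕ) : ℤ := 6 * (Nat.sqrt (s + 1) : ℤ) - 6

/-- `N_s^odd = 6⌊(√(4s+5) - 1)/2⌋ - 3`. -/
def NOdd (s : ℕ) : ℤ := 6 * (((Nat.sqrt (4 * s + 5) - 1) / 2 : ℕ) : ℤ) - 3

/-- `δ_s = 1` if `s ≥ ⌊√s⌋² + ⌊√s⌋`, and `0` otherwise. -/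
def deltaS (s : ℕ) : ℤ := if Nat.sqrt s ^ 2 + Nat.sqrt s ≤ s then 1 else 0

/-- `q_s = 2⌊√s⌋ + 2 + δ_s`. -/
def qS (s : ℕ) : ℤ := 2 * (Nat.sqrt s : ℤ) + 2 + deltaS s

/-- `c_s = s - ⌊√s⌋² - δ_s⌊√s⌋`. -/
def cS (s : ℕ) : ℤ := (s : ℤ) - (Nat.sqrt s : ℤ) ^ 2 - deltaS s * (Nat.sqrt s : ℤ)

/-- For `s = k(k+1) + i` with `0 ≤ i ≤ 2k+1`: `x_s^even`. -/
def xEvenN (k i : ℕ) : ℕ := if i ≤ k then i else i - k - 1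

/-- For `s = k(k+1) + i` with `0 ≤ i ≤ 2k+1`: `y_s^even`. -/
def yEvenN (k i : ℕ) : ℕ := if i ≤ k then 2 * (k - i) else 4 * k + 3 - 2 * i

/-- For `s = k(k+1) + i` with `0 ≤ i ≤ 2k+1`: `x_s^odd`. -/
def xOddN (k i : ℕ) : ℕ := if i ≤ k then 2 * i else 2 * (i - k) - 1

/-- For `s = k(k+1) + i` with `0 ≤ i ≤ 2k+1`: `y_s^odd`. -/
def yOddN (k i : ℕ) : ℕ := if i ≤ k then k - i else 2 * k + 1 - i

lemma div_eval {d q r m : ℕ} (h : m = d * q + r) (hr : r < d) : m / d = q := by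
  subst h
  rw [Nat.mul_add_div (by omega)]
  simp [Nat.div_eq_of_lt hr]


lemma pair_card (a N m : ℕ) (ha : 0 < a) (hm : m ≤ N) :
    (univ.filter (fun x : Fin 2 → Fin (N+1) => a * (x 0 : ℕ) + (a+1) * (x 1 : ℕ) = m)).card
      = m / a + 1 - (m + a) / (a + 1) := by
  rw [← Nat.card_Icc ((m + a)/(a+1)) (m / a)]
  apply Finset.card_bij (fun x _ => (x 0 : ℕ) + (x 1 : ℕ))
  · intro x hx
    simp only [mem_filter, mem_univ, true_and] at hx
    rw [mem_Icc]
    constructor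
    · rw [Nat.div_le_iff_le_mul_add_pred (by omega)]
      have : (a+1) * ((x 0:ℕ) + (x 1:ℕ)) = a * (x 0:ℕ) + (a+1)*(x 1:ℕ) + (x 0:ℕ) := by ring
      omega
    · rw [Nat.le_div_iff_mul_le ha]
      have : ((x 0:ℕ) + (x 1:ℕ)) * a = a * (x 0:ℕ) + a*(x 1:ℕ) := by ring
      have : a*(x 1:ℕ) ≤ (a+1)*(x 1:ℕ) := by nlinarith
      omega
  · intro x hx x' hx' hsum
    simp only [mem_filter, mem_univ, true_and] at hx hx'
    have e1 : a * ((x 0:ℕ) + (x 1:ℕ)) + (x 1:ℕ) = m := by rw [← hx]; ring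
    have e2 : a * ((x' 0:ℕ) + (x' 1:ℕ)) + (x' 1:ℕ) = m := by rw [← hx']; ring
    rw [hsum] at e1
    have hv1 : (x 1:ℕ) = (x' 1:ℕ) := by omega
    have hv0 : (x 0:ℕ) = (x' 0:ℕ) := by omega
    funext j
    fin_cases j <;> ext <;> assumption
  · intro w hw
    rw [mem_Icc] at hw
    have hwH : w * a ≤ m := (Nat.le_div_iff_mul_le ha).mp hw.2
    have hwL : m + a ≤ (a+1) * w + (a+1-1) := (Nat.div_le_iff_le_mul_add_pred (by omega)).mp hw.1
    have hvw : m - a*w ≤ w := by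
      have : (a+1)*w = a*w + w := by ring
      omega
    have hwm : w ≤ m := by
      have : w * 1 ≤ w * a := by nlinarith
      omega
    refine ⟨![⟨w - (m - a*w), by omega⟩, ⟨m - a*w, by omega⟩], ?_, ?_⟩
    · rw [mem_filter]
      refine ⟨mem_univ _, ?_⟩
      simp only [Matrix.cons_val_zero, Matrix.cons_val_one, Matrix.head_cons, Fin.val_mk]
      have h1 : a * (w - (m - a*w)) + a * (m - a*w) = a * w := by
        rw [← Nat.mul_add, Nat.sub_add_cancel hvw]
      have h2 : (a+1) * (m - a*w) = a * (m - a*w) + (m - a*w) := by ring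
      have h3 : w * a = a * w := by ring
      omega
    · show ((⟨w - (m - a*w), by omega⟩ : Fin (N+1)) : ℕ) + ((⟨m - a*w, by omega⟩ : Fin (N+1)) : ℕ) = w
      simp only [Fin.val_mk]
      omega

lemma triple_card (T a M : ℕ) (ha : 0 < a) (hT : 0 < T) :
    repCount ![T, a, a+1] M
      = ∑ j ∈ range (M+1),
          (if T*j ≤ M then ((M - T*j)/a + 1 - ((M - T*j) + a)/(a+1)) else 0) := by
  unfold repCount
  have hset : (Finset.univ.filter
      (fun x : Fin 3 → Fin (M + 1) => ∑ i, (![T, a, a+1]) i * (x i : ℕ) = M))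
      = (Finset.univ.filter
      (fun x : Fin 3 → Fin (M + 1) => T * (x 0:ℕ) + (a * (x 1:ℕ) + (a+1) * (x 2:ℕ)) = M)) := by
    apply filter_congr
    intro x _
    simp [Fin.sum_univ_three, add_assoc]
  rw [hset]
  have hmaps : ∀ x ∈ (Finset.univ.filter
      (fun x : Fin 3 → Fin (M + 1) => T * (x 0:ℕ) + (a * (x 1:ℕ) + (a+1) * (x 2:ℕ)) = M)),
      (x 0 : ℕ) ∈ range (M+1) := by
    intro x hx
    simp only [mem_filter, mem_univ, true_and] at hx
    have h1 : 1 * (x 0:ℕ) ≤ T * (x 0:ℕ) := by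
      apply Nat.mul_le_mul_right; omega
    rw [mem_range]; omega
  rw [Finset.card_eq_sum_card_fiberwise hmaps]
  apply Finset.sum_congr rfl
  intro j hj
  by_cases hTj : T * j ≤ M
  · rw [if_pos hTj]
    rw [← pair_card a M (M - T*j) ha (by omega)]
    apply Finset.card_bij (fun x _ => ![x 1, x 2])
    · intro x hx
      simp only [mem_filter, mem_univ, true_and] at hx
      obtain ⟨h1, h2⟩ := hx
      simp only [mem_filter, mem_univ, true_and, Matrix.cons_val_zero, Matrix.cons_val_one,
        Matrix.head_cons]
      have h3 : T * (x 0 : ℕ) = T * j := by rw [h2]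
      omega
    · intro x hx x' hx' hsum
      simp only [mem_filter, mem_univ, true_and] at hx hx'
      have e1 := congrFun hsum 0
      have e2 := congrFun hsum 1
      simp only [Matrix.cons_val_zero, Matrix.cons_val_one, Matrix.head_cons] at e1 e2
      have e0 : x 0 = x' 0 := by
        ext
        have h2 := hx.2; have h2' := hx'.2
        omega
      funext jj
      fin_cases jj
      · exact e0
      · exact e1
      · exact e2
    · intro y hy
      simp only [mem_filter, mem_univ, true_and] at hy
      refine ⟨![⟨j, Finset.mem_range.mp hj⟩, y 0, y 1], ?_, ?_⟩
      · simp only [mem_filter, mem_univ, true_and, Matrix.cons_val_zero, Matrix.cons_val_one,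
          Matrix.cons_val_two, Matrix.tail_cons, Matrix.head_cons, Fin.val_mk]
        exact ⟨by omega, trivial⟩
      · funext jj
        fin_cases jj <;>
          simp [Matrix.cons_val_zero, Matrix.cons_val_one, Matrix.cons_val_two,
            Matrix.tail_cons, Matrix.head_cons]
  · rw [if_neg hTj]
    rw [Finset.card_eq_zero, Finset.eq_empty_iff_forall_notMem]
    intro x hx
    simp only [mem_filter, mem_univ, true_and] at hx
    have h3 : T * (x 0 : ℕ) = T * j := by rw [hx.2]
    have := hx.1
    omega

lemma repCount_pair (a m : ℕ) (ha : 0 < a) :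
    repCount ![a, a+1] m = m / a + 1 - (m + a)/(a+1) := by
  unfold repCount
  rw [← pair_card a m m ha le_rfl]
  congr 1


lemma sumB (x p : ℕ) (h : 2*p ≤ x) : ∑ jj ∈ range p, (x - 1 - 2*jj) = p*x - p*p := by
  induction p with
  | zero => simp
  | succ q ih =>
    rw [Finset.sum_range_succ, ih (by omega)]
    have e1 : (q+1)*x = q*x + x := by ring
    have e2 : (q+1)*(q+1) = q*q + 2*q + 1 := by ring
    have e3 : q*q ≤ q*x := Nat.mul_le_mul_left _ (by omega)
    omega


lemma main_sum (a' x y p : ℕ) (hx : x ≤ 2*p+1) (hpx : 2*p ≤ x)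
    (hya : 3*y ≤ a'+2) (hpa : 3*p ≤ a'+2)
    (htail : x*(a'+3) + 1 ≤ (p+1)*(2*a'+3)) :
    repCount ![(a'+2)*(2*a'+3), a'+2, a'+3]
        ((x+1)*((a'+2)*(a'+3)) + y*((a'+2)*(2*a'+3)) - (2*a'+5))
      = (y+1)*x + y*(y+1) + (p*x - p*p) := by
  set T := (a'+2)*(2*a'+3) with hTdef
  set M := (x+1)*((a'+2)*(a'+3)) + y*T - (2*a'+5) with hMdef
  have hbig : (2*a'+5) ≤ (x+1)*((a'+2)*(a'+3)) := by
    have h0 : 1*((a'+2)*(a'+3)) ≤ (x+1)*((a'+2)*(a'+3)) := Nat.mul_le_mul_right _ (by omega)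
    have h1 : (a'+2)*(a'+3) = a'*a'+5*a'+6 := by ring
    omega
  have hM : M + (2*a'+5) = (x+1)*((a'+2)*(a'+3)) + y*T := by
    rw [hMdef]; omega
  have h23 : a'+2+1 = a'+3 := by omega
  have step := triple_card T (a'+2) M (by omega) (by positivity)
  rw [h23] at step
  rw [step]
  -- per-term evaluation
  have hterm : ∀ j ∈ range (M+1),
      (if T*j ≤ M then ((M - T*j)/(a'+2) + 1 - ((M - T*j) + (a'+2))/(a'+3)) else 0)
        = (if j ≤ y then x + 2*(y-j) else x + 1 - 2*(j-y)) := by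
    intro j _
    rcases le_or_gt j y with hjy | hjy
    · -- branch A
      obtain ⟨e, he⟩ : ∃ e, y = j + e := ⟨y - j, by omega⟩
      have hjt : T*j ≤ M := by
        have h1 : T*j ≤ T*y := Nat.mul_le_mul_left _ hjy
        have h2 : T*y = y*T := Nat.mul_comm _ _
        omega
      have hmv : M - T*j = (a'+2) * (x*(a'+3) + a' + e*(2*a'+3)) + (a'+1) := by
        have hr : (x+1)*((a'+2)*(a'+3)) + (j+e)*T
            = T*j + (((a'+2) * (x*(a'+3) + a' + e*(2*a'+3)) + (a'+1)) + (2*a'+5)) := by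
          rw [hTdef]; ring
        rw [← he] at hr
        omega
      have hd1 : (M - T*j) / (a'+2) = x*(a'+3) + a' + e*(2*a'+3) :=
        div_eval hmv (by omega)
      have hd2 : ((M - T*j) + (a'+2)) / (a'+3) = x*(a'+2) + (a'+1) + e*(2*a'+1) := by
        refine div_eval (r := 3*e) ?_ (by omega)
        rw [hmv]; ring
      rw [if_pos hjt, if_pos hjy, hd1, hd2]
      have hx1 : x*(a'+3) = x*(a'+2) + x := by ring
      have he1 : e*(2*a'+3) = e*(2*a'+1) + 2*e := by ring
      omega
    · rcases le_or_gt j (y + p) with hjp | hjp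
      · -- branch B
        obtain ⟨f, hf⟩ : ∃ f, j = y + f := ⟨j - y, by omega⟩
        have hf1 : 1 ≤ f := by omega
        have hfp : f ≤ p := by omega
        obtain ⟨g, hg⟩ : ∃ g, x = 2*f + g := ⟨x - 2*f, by omega⟩
        have hf3 : 3*f ≤ a'+2 := by omega
        have hjt : T*j ≤ M := by
          have h1 : T*f + (2*a'+5) ≤ (x+1)*((a'+2)*(a'+3)) := by
            have hTf : T*(2*f) ≤ T*(2*p) := Nat.mul_le_mul_left _ (by omega)
            have hTx : T*(2*p) ≤ T*x := Nat.mul_le_mul_left _ hpx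
            have e1 : 2*((x+1)*((a'+2)*(a'+3))) = T*x + x*(3*a'+6) + (2*(a'*a')+10*a'+12) := by
              rw [hTdef]; ring
            have e2 : T*(2*f) = 2*(T*f) := by ring
            omega
          have h2 : T*j = y*T + T*f := by rw [hf]; ring
          omega
        have hmv : M - T*j = (a'+2) * (3*f + g*(a'+3) + a') + (a'+1) := by
          have hr : (2*f+g+1)*((a'+2)*(a'+3)) + y*T
              = T*(y+f) + (((a'+2) * (3*f + g*(a'+3) + a') + (a'+1)) + (2*a'+5)) := by
            rw [hTdef]; ring
          rw [← hf] at hr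
          have h4 : (x+1)*((a'+2)*(a'+3)) = (2*f+g+1)*((a'+2)*(a'+3)) := by rw [hg]
          omega
        have hd1 : (M - T*j) / (a'+2) = 3*f + g*(a'+3) + a' := div_eval hmv (by omega)
        have hd2 : ((M - T*j) + (a'+2)) / (a'+3) = 3*f + g*(a'+2) + a' := by
          obtain ⟨rr, hrr⟩ : ∃ rr, a'+3 = 3*f + rr := ⟨a'+3-3*f, by omega⟩
          refine div_eval (r := rr) ?_ (by omega)
          have h5 : (M - T*j) + (a'+2) + 3*f = (a'+3)*(3*f + g*(a'+2) + a') + (a'+3) := by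
            rw [hmv]; ring
          omega
        rw [if_pos hjt, if_neg (by omega), hd1, hd2]
        have h6 : g*(a'+3) = g*(a'+2) + g := by ring
        omega
      · -- branch C
        have hR : (if j ≤ y then x + 2*(y-j) else x + 1 - 2*(j-y)) = 0 := by
          rw [if_neg (by omega : ¬ j ≤ y)]
          omega
        rw [hR]
        by_cases hjt : T*j ≤ M
        · rw [if_pos hjt]
          have hdvd : (a'+2) ∣ ((M - T*j) + 1) := by
            have h1 : (M - T*j) + 1
                = ((x+1)*((a'+2)*(a'+3)) + y*T) - (T*j + 2*(a'+2)) := by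
              have : T*j + (2*a'+4) ≤ (x+1)*((a'+2)*(a'+3)) + y*T := by omega
              omega
            rw [h1]
            apply Nat.dvd_sub
            · exact dvd_add ⟨(x+1)*(a'+3), by ring⟩ ⟨y*(2*a'+3), by rw [hTdef]; ring⟩
            · exact dvd_add ⟨(2*a'+3)*j, by rw [hTdef]; ring⟩ ⟨2, by ring⟩
          obtain ⟨W, hW⟩ := hdvd
          have hW1 : 1 ≤ W := by
            rcases Nat.eq_zero_or_pos W with h | h
            · rw [h, mul_zero] at hW; omega
            · exact h
          obtain ⟨W', rfl⟩ : ∃ W', W = W' + 1 := ⟨W - 1, by omega⟩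
          have hWle : W' ≤ a' := by
            -- m + 1 ≤ (a'+2)*(a'+1)
            have h1 : T*(y+p+1) ≤ T*j := Nat.mul_le_mul_left _ (by omega)
            have h2 : (x*(a'+3) + 1)*(a'+2) ≤ ((p+1)*(2*a'+3))*(a'+2) :=
              Nat.mul_le_mul_right _ htail
            have e1 : (x+1)*((a'+2)*(a'+3)) = x*((a'+3)*(a'+2)) + (a'+2)*(a'+3) := by ring
            have e2 : (x*(a'+3)+1)*(a'+2) = x*((a'+3)*(a'+2)) + (a'+2) := by ring
            have e3 : ((p+1)*(2*a'+3))*(a'+2) = T*(p+1) := by rw [hTdef]; ring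
            have e4 : T*(y+p+1) = T*y + T*(p+1) := by ring
            have e5 : T*y = y*T := by ring
            have e6 : (a'+2)*(a'+3) = (a'+2)*(a'+1) + 2*(a'+2) := by ring
            have hmle : (M - T*j) + 1 ≤ (a'+2)*(a'+1) := by omega
            have e7 : (a'+2)*(W'+1) = (a'+2)*W' + (a'+2) := by ring
            have e8 : (a'+2)*(a'+1) = (a'+2)*a' + (a'+2) := by ring
            have := Nat.mul_le_mul_left (a'+2) (le_refl W')
            -- (a'+2)*W' ≤ (a'+2)*a'
            have h9 : (a'+2)*W' ≤ (a'+2)*a' := by omega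
            exact Nat.le_of_mul_le_mul_left h9 (by omega)
          have hmv : M - T*j = (a'+2)*W' + (a'+1) := by
            have : (a'+2)*(W'+1) = (a'+2)*W' + (a'+2) := by ring
            omega
          have hd1 : (M - T*j) / (a'+2) = W' := div_eval hmv (by omega)
          have hd2 : W' + 1 ≤ ((M - T*j) + (a'+2)) / (a'+3) := by
            rw [Nat.le_div_iff_mul_le (by omega)]
            have : (W'+1)*(a'+3) = (a'+2)*W' + W' + (a'+3) := by ring
            omega
          rw [hd1]
          omega
        · rw [if_neg hjt]
  rw [Finset.sum_congr rfl hterm]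
  -- split the sum
  have hyM : y + p ≤ M := by
    have eAA : (x+1)*((a'+2)*(a'+3)) = x*((a'+2)*(a'+3)) + a'*a' + 5*a' + 6 := by ring
    have hyT : y ≤ y*T := Nat.le_mul_of_pos_right _ (by positivity)
    omega
  rw [Finset.range_eq_Ico, ← Finset.sum_Ico_consecutive _ (by omega : 0 ≤ y+1) (by omega : y+1 ≤ M+1)]
  have hS2 : ∑ j ∈ Ico (y+1) (M+1), (if j ≤ y then x + 2*(y-j) else x + 1 - 2*(j-y))
      = p*x - p*p := by
    rw [← Finset.sum_subset (Finset.Ico_subset_Ico le_rfl (by omega : y+p+1 ≤ M+1))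
      (fun j hj hj2 => by
        rw [mem_Ico] at hj hj2
        rw [if_neg (by omega)]
        omega)]
    have hcong : ∀ j ∈ Ico (y+1) (y+p+1),
        (if j ≤ y then x + 2*(y-j) else x + 1 - 2*(j-y)) = x - 1 - 2*(j - (y+1)) := by
      intro j hj
      rw [mem_Ico] at hj
      rw [if_neg (by omega)]
      omega
    rw [Finset.sum_congr rfl hcong, Finset.sum_Ico_eq_sum_range]
    have : y + p + 1 - (y+1) = p := by omega
    rw [this]
    have hcong2 : ∀ jj ∈ range p, (x - 1 - 2*(y + 1 + jj - (y+1))) = x - 1 - 2*jj := by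
      intro jj _
      congr 1
      omega
    rw [Finset.sum_congr rfl hcong2, sumB x p hpx]
  rw [hS2]
  have hS1 : ∑ j ∈ Ico 0 (y+1), (if j ≤ y then x + 2*(y-j) else x + 1 - 2*(j-y))
      = (y+1)*x + y*(y+1) := by
    rw [← Finset.range_eq_Ico]
    have hcong : ∀ j ∈ range (y+1),
        (if j ≤ y then x + 2*(y-j) else x + 1 - 2*(j-y)) = x + 2*(y-j) := by
      intro j hj
      rw [mem_range] at hj
      rw [if_pos (by omega)]
    rw [Finset.sum_congr rfl hcong]
    have hcong2 : ∀ j ∈ range (y+1), x + 2*(y-j) = x + 2*(y+1-1-j) := by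
      intro j _; omega
    rw [Finset.sum_congr rfl hcong2,
      Finset.sum_range_reflect (fun j => x + 2*j) (y+1)]
    rw [Finset.sum_add_distrib, Finset.sum_const, Finset.card_range, ← Finset.mul_sum,
      smul_eq_mul]
    have hgauss := Finset.sum_range_id_mul_two (y+1)
    have hc : (y+1)*(y+1-1) = y*(y+1) := by
      have : y+1-1 = y := by omega
      rw [this]; ring
    omega
  rw [hS1]

lemma genFrob_pair (a' x : ℕ) :
    genFrob ![a'+2, a'+3] x = (((x+1)*((a'+2)*(a'+3)) - (2*a'+5) : ℕ) : ℤ) := by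
  have hbig : (2*a'+5) ≤ (x+1)*((a'+2)*(a'+3)) := by
    have h0 : 1*((a'+2)*(a'+3)) ≤ (x+1)*((a'+2)*(a'+3)) := Nat.mul_le_mul_right _ (by omega)
    have h1 : (a'+2)*(a'+3) = a'*a'+5*a'+6 := by ring
    omega
  set G : ℕ := (x+1)*((a'+2)*(a'+3)) - (2*a'+5) with hGdef
  have hG : G + (2*a'+5) = (x+1)*((a'+2)*(a'+3)) := by omega
  have h23 : a'+2+1 = a'+3 := by omega
  have hcount : ∀ m : ℕ, repCount ![a'+2, a'+3] m = m/(a'+2) + 1 - (m + (a'+2))/(a'+3) := by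
    intro m
    have := repCount_pair (a'+2) m (by omega)
    rw [h23] at this
    exact this
  unfold genFrob
  apply IsGreatest.csSup_eq
  constructor
  · -- membership
    show repCountZ ![a'+2, a'+3] ((G : ℕ) : ℤ) ≤ x
    unfold repCountZ
    rw [if_pos (Int.natCast_nonneg _), Int.toNat_natCast, hcount G]
    have hd1 : G / (a'+2) = x*(a'+3) + a' := by
      refine div_eval (r := a'+1) ?_ (by omega)
      have : (x+1)*((a'+2)*(a'+3)) = (a'+2)*(x*(a'+3) + a') + (a'+1) + (2*a'+5) := by ring
      omega
    have hd2 : (G + (a'+2)) / (a'+3) = x*(a'+2) + (a'+1) := by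
      refine div_eval (r := 0) ?_ (by omega)
      have : (x+1)*((a'+2)*(a'+3)) + (a'+2) = ((a'+3) * (x*(a'+2) + (a'+1)) + 0) + (2*a'+5) := by
        ring
      omega
    rw [hd1, hd2]
    have e1 : x*(a'+3) = x*(a'+2) + x := by ring
    omega
  · -- upper bound
    intro m hm
    simp only [Set.mem_setOf_eq] at hm
    by_contra hgt
    push_neg at hgt
    have hm0 : 0 ≤ m := le_trans (Int.natCast_nonneg G) (le_of_lt hgt)
    set m' := m.toNat with hm'def
    have hmG : G + 1 ≤ m' := by omega
    unfold repCountZ at hm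
    rw [if_pos hm0, hcount m'] at hm
    -- show count ≥ x + 1 : contradiction
    have hm'lb : ((a'+2)*(a'+3))*x + (a'*a'+5*a'+6) ≤ m' + 2*a'+4 := by
      have e4 : (x+1)*((a'+2)*(a'+3)) = ((a'+2)*(a'+3))*x + (a'*a'+5*a'+6) := by ring
      omega
    obtain ⟨H, hHdef⟩ : ∃ v, m' / (a'+2) = v := ⟨_, rfl⟩
    obtain ⟨L, hLdef⟩ : ∃ v, (m' + (a'+2)) / (a'+3) = v := ⟨_, rfl⟩
    rw [hHdef, hLdef] at hm
    have fA := Nat.div_add_mod m' (a'+2)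
    rw [hHdef] at fA
    have fA2 : m' % (a'+2) < a'+2 := Nat.mod_lt _ (by omega)
    have fB := Nat.div_add_mod (m' + (a'+2)) (a'+3)
    rw [hLdef] at fB
    have fB2 : (m' + (a'+2)) % (a'+3) < a'+3 := Nat.mod_lt _ (by omega)
    obtain ⟨r, hr, hrA⟩ : ∃ r, r < a'+2 ∧ (a'+2)*H + r = m' := ⟨m' % (a'+2), fA2, fA⟩
    obtain ⟨r2, hr2, hrB⟩ : ∃ r2, r2 < a'+3 ∧ (a'+3)*L + r2 = m' + (a'+2) :=
      ⟨(m' + (a'+2)) % (a'+3), fB2, fB⟩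
    -- we show x + L ≤ H
    have hkey : x + L ≤ H := by
      by_contra hc
      push_neg at hc
      -- H + 1 ≤ x + L
      have h6 : ((a'+2)*(a'+3))*(H+1) ≤ ((a'+2)*(a'+3))*(x+L) :=
        Nat.mul_le_mul_left _ hc
      have hAH : ((a'+2)*(a'+3))*H + (a'+3)*r = (a'+3)*m' := by
        have h9 : (a'+3)*((a'+2)*H + r) = ((a'+2)*(a'+3))*H + (a'+3)*r := by ring
        rw [hrA] at h9
        omega
      have hBL : ((a'+2)*(a'+3))*L + (a'+2)*r2 = (a'+2)*m' + (a'*a'+4*a'+4) := by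
        have h7 : (a'+2)*((a'+3)*L + r2) = ((a'+2)*(a'+3))*L + (a'+2)*r2 := by ring
        have h8 : (a'+2)*(m' + (a'+2)) = (a'+2)*m' + (a'*a'+4*a'+4) := by ring
        rw [hrB] at h7
        omega
      have hrb : (a'+3)*r ≤ (a'+3)*(a'+1) := Nat.mul_le_mul_left _ (by omega)
      have e1 : ((a'+2)*(a'+3))*(x+L) = ((a'+2)*(a'+3))*x + ((a'+2)*(a'+3))*L := by ring
      have e2 : ((a'+2)*(a'+3))*(H+1) = ((a'+2)*(a'+3))*H + (a'*a'+5*a'+6) := by ring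
      have e3 : (a'+3)*m' = (a'+2)*m' + m' := by ring
      have e7 : (a'+3)*(a'+1) = a'*a' + 4*a' + 3 := by ring
      omega
    omega


lemma genFrob_one : genFrob ![1, 2] 0 = -1 := by
  unfold genFrob
  apply IsGreatest.csSup_eq
  constructor
  · show repCountZ ![1, 2] (-1) ≤ 0
    unfold repCountZ
    rw [if_neg (by norm_num)]
  · intro m hm
    simp only [Set.mem_setOf_eq] at hm
    by_contra hgt
    push_neg at hgt
    have hm0 : 0 ≤ m := by omega
    unfold repCountZ at hm
    rw [if_pos hm0] at hm
    set m' := m.toNat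
    have : 0 < repCount ![1, 2] m' := by
      rw [repCount]
      apply Finset.card_pos.mpr
      refine ⟨![⟨m', by omega⟩, ⟨0, by omega⟩], ?_⟩
      simp [Fin.sum_univ_two]
    omega

lemma NOdd_lb (k i : ℕ) : (6*(k:ℤ) - 3) ≤ NOdd (k*(k+1)+i) := by
  have h1 : 2*k+1 ≤ Nat.sqrt (4*(k*(k+1)+i)+5) := by
    rw [Nat.le_sqrt]
    have : (2*k+1)*(2*k+1) = 4*(k*(k+1))+1 := by ring
    omega
  unfold NOdd
  have h2 : k ≤ (Nat.sqrt (4*(k*(k+1)+i)+5) - 1)/2 := by omega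
  omega

lemma NOdd_lb2 (k : ℕ) : (6*(k:ℤ) + 3) ≤ NOdd (k*(k+1)+(2*k+1)) := by
  have h1 : 2*k+3 ≤ Nat.sqrt (4*(k*(k+1)+(2*k+1))+5) := by
    rw [Nat.le_sqrt]
    have : (2*k+3)*(2*k+3) = 4*(k*(k+1)) + 8*k + 9 := by ring
    omega
  unfold NOdd
  have h2 : k+1 ≤ (Nat.sqrt (4*(k*(k+1)+(2*k+1))+5) - 1)/2 := by omega
  omega

/-- with `s = k(k+1) + i`, `0 ≤ i ≤ 2k+1`, for odd `n > N_s^odd`,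
`d(g((n+1)/2, (n+3)/2; x_s^odd) + y_s^odd·t_n ; t_n, (n+1)/2, (n+3)/2) = s`. -/
theorem stmt_9 (k i n : ℕ) (hi : i ≤ 2 * k + 1) (hn : Odd n)
    (hbound : (n : ℤ) > NOdd (k * (k + 1) + i)) :
    repCountZ ![t n, (n + 1) / 2, (n + 3) / 2]
        (genFrob ![(n + 1) / 2, (n + 3) / 2] (xOddN k i) + ((yOddN k i * t n : ℕ) : ℤ)) =
      k * (k + 1) + i := by
  obtain ⟨c, rfl⟩ := hn
  have hlb := NOdd_lb k i
  have hc3k : 3*k ≤ c+1 := by omega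
  rcases Nat.eq_zero_or_pos c with hc0 | hcpos
  · -- n = 1
    subst hc0
    have hk0 : k = 0 := by omega
    subst hk0
    have hi0 : i = 0 := by
      by_contra hne
      have hieq : i = 1 := by omega
      subst hieq
      have h2 := NOdd_lb2 0
      norm_num at h2 hbound
      omega
    subst hi0
    norm_num [xOddN, yOddN]
    rw [genFrob_one]
    norm_num [repCountZ]
  · obtain ⟨a', rfl⟩ : ∃ a', c = a' + 1 := ⟨c - 1, by omega⟩
    have e1 : (2*(a'+1)+1+1)/2 = a'+2 := by omega
    have e2 : (2*(a'+1)+1+3)/2 = a'+3 := by omega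
    have e3 : t (2*(a'+1)+1) = (a'+2)*(2*a'+3) := by
      unfold t
      have h : (2*(a'+1)+1) * (2*(a'+1)+1+1) = ((a'+2)*(2*a'+3))*2 := by ring
      rw [h, Nat.mul_div_cancel _ (by norm_num)]
    rw [e1, e2, e3]
    rcases le_or_gt i k with hik | hik
    · -- case 1
      have hx : xOddN k i = 2*i := by simp [xOddN, hik]
      have hy : yOddN k i = k - i := by simp [yOddN, hik]
      rw [hx, hy, genFrob_pair]
      have hbig : (2*a'+5) ≤ (2*i+1)*((a'+2)*(a'+3)) := by
        have h0 : 1*((a'+2)*(a'+3)) ≤ (2*i+1)*((a'+2)*(a'+3)) := Nat.mul_le_mul_right _ (by omega)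
        have h1 : (a'+2)*(a'+3) = a'*a'+5*a'+6 := by ring
        omega
      have hcast : (((2*i+1)*((a'+2)*(a'+3)) - (2*a'+5) : ℕ) : ℤ)
            + (((k-i) * ((a'+2)*(2*a'+3)) : ℕ) : ℤ)
          = (((2*i+1)*((a'+2)*(a'+3)) + (k-i)*((a'+2)*(2*a'+3)) - (2*a'+5) : ℕ) : ℤ) := by
        rw [Nat.cast_sub hbig, Nat.cast_sub (by omega)]
        push_cast
        ring
      rw [hcast]
      unfold repCountZ
      rw [if_pos (Int.natCast_nonneg _), Int.toNat_natCast]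
      have htail : (2*i)*(a'+3) + 1 ≤ (i+1)*(2*a'+3) := by
        have t1 : 2*i*(a'+3) = 2*(i*a') + 6*i := by ring
        have t2 : (i+1)*(2*a'+3) = 2*(i*a') + 3*i + (2*a'+3) := by ring
        omega
      have hms := main_sum a' (2*i) (k-i) i (by omega) (by omega) (by omega) (by omega) htail
      rw [hms]
      -- final identity
      obtain ⟨d, hd⟩ : ∃ d, k = i + d := ⟨k - i, by omega⟩
      have q1 : (k-i+1)*(2*i) = 2*(d*i) + 2*i := by rw [show k-i = d from by omega]; ring
      have q2 : (k-i)*(k-i+1) = d*d + d := by rw [show k-i = d from by omega]; ring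
      have q3 : i*(2*i) = 2*(i*i) := by ring
      have q4 : i*i ≤ i*(2*i) := Nat.mul_le_mul_left _ (by omega)
      have q5 : k*(k+1) = i*i + 2*(d*i) + d*d + i + d := by rw [hd]; ring
      omega
    · -- case 2
      obtain ⟨u, hu⟩ : ∃ u, i = k+1+u := ⟨i-k-1, by omega⟩
      have hx : xOddN k i = 2*u+1 := by
        rw [xOddN, if_neg (by omega)]
        omega
      have hy : yOddN k i = k - u := by
        rw [yOddN, if_neg (by omega)]
        omega
      have hu_k : u ≤ k := by omega
      have ha2 : 3*u + 3 ≤ a'+2 := by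
        rcases Nat.lt_or_ge u k with h | h
        · omega
        · have huk : u = k := by omega
          have h2 := NOdd_lb2 k
          have hb2 : ((2*(a'+1)+1 : ℕ) : ℤ) > NOdd (k*(k+1)+(2*k+1)) := by
            rw [show k*(k+1)+(2*k+1) = k*(k+1)+i from by omega]
            exact_mod_cast hbound
          omega
      rw [hx, hy, genFrob_pair]
      have hbig : (2*a'+5) ≤ (2*u+1+1)*((a'+2)*(a'+3)) := by
        have h0 : 1*((a'+2)*(a'+3)) ≤ (2*u+1+1)*((a'+2)*(a'+3)) := Nat.mul_le_mul_right _ (by omega)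
        have h1 : (a'+2)*(a'+3) = a'*a'+5*a'+6 := by ring
        omega
      have hcast : (((2*u+1+1)*((a'+2)*(a'+3)) - (2*a'+5) : ℕ) : ℤ)
            + (((k-u) * ((a'+2)*(2*a'+3)) : ℕ) : ℤ)
          = (((2*u+1+1)*((a'+2)*(a'+3)) + (k-u)*((a'+2)*(2*a'+3)) - (2*a'+5) : ℕ) : ℤ) := by
        rw [Nat.cast_sub hbig, Nat.cast_sub (by omega)]
        push_cast
        ring
      rw [hcast]
      unfold repCountZ
      rw [if_pos (Int.natCast_nonneg _), Int.toNat_natCast]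
      have htail : (2*u+1)*(a'+3) + 1 ≤ (u+1)*(2*a'+3) := by
        have t1 : (2*u+1)*(a'+3) = 2*(u*a') + 6*u + a' + 3 := by ring
        have t2 : (u+1)*(2*a'+3) = 2*(u*a') + 3*u + (2*a'+3) := by ring
        omega
      have hms := main_sum a' (2*u+1) (k-u) u (by omega) (by omega) (by omega) (by omega) htail
      rw [hms]
      obtain ⟨d, hd⟩ : ∃ d, k = u + d := ⟨k - u, by omega⟩
      have q1 : (k-u+1)*(2*u+1) = 2*(d*u) + d + 2*u + 1 := by rw [show k-u = d from by omega]; ring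
      have q2 : (k-u)*(k-u+1) = d*d + d := by rw [show k-u = d from by omega]; ring
      have q3 : u*(2*u+1) = 2*(u*u) + u := by ring
      have q4 : u*u ≤ u*(2*u+1) := Nat.mul_le_mul_left _ (by omega)
      have q5 : k*(k+1) = u*u + 2*(d*u) + d*d + u + d := by rw [hd]; ring
      omega
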